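/- Let M be an abelian group, I a set, and G = M^I the direct product of copies of M indexed by I. The following conditions are equivalent: (i) every countable controllable subgroup of G is uniformly controllable in G; (ii) every controllable subgroup of G is uniformly controllable in G; (iii) either I is finite or M is finitely generated. -/

import Mathlib

/-- Projection of an element of the direct product `I → M` to the coordinates
in `J`. -/
def proj {I : Type*} {M : Type*} (J : Set I) (g : I → M) : J → M :=
  fun j => g j

/-- A subgroup `H` of the direct product `G = M^I` is *controllable* in `G` if
`p_J(H) = p_J(H ∩ ⊕_{i ∈ I} M)` for every finite `J ⊆ I`. -/
def Controllable {I : Type*} {M : Type*} [AddCommGroup M]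
    (H : AddSubgroup (I → M)) : Prop :=
  ∀ J : Set I, J.Finite →
    proj J '' (H : Set (I → M)) =
      proj J '' ((H : Set (I → M)) ∩ {g | {i | g i ≠ 0}.Finite})

/-- A subgroup `H` of the direct product `G = M^I` is *uniformly controllable*
in `G` if for every finite `J ⊆ I` there is a finite `K ⊆ I` with
`p_J(H) = p_J(H ∩ ⊕_{i ∈ K} M)`. -/
def UniformlyControllable {I : Type*} {M : Type*} [AddCommGroup M]
    (H : AddSubgroup (I → M)) : Prop :=
  ∀ J : Set I, J.Finite → ∃ K : Set I, K.Finite ∧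
    proj J '' (H : Set (I → M)) =
      proj J '' ((H : Set (I → M)) ∩ {g | ∀ i ∉ K, g i = 0})

/-- If `I` is finite, every subgroup of `M^I` is uniformly controllable. -/
lemma uc_of_finite' {I M : Type*} [AddCommGroup M] [Finite I]
    (H : AddSubgroup (I → M)) : UniformlyControllable H := by
  intro J hJ
  refine ⟨Set.univ, Set.finite_univ, ?_⟩
  simp

/-- If `M` is finitely generated, every controllable subgroup of `M^I` is
uniformly controllable. -/
lemma uc_of_fg' {I M : Type*} [AddCommGroup M] (hM : AddGroup.FG M)
    (H : AddSubgroup (I → M)) (hH : Controllable H) : UniformlyControllable H := by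
  classical
  intro J hJ
  haveI : Finite J := hJ.to_subtype
  haveI : Module.Finite ℤ M := Module.Finite.iff_addGroup_fg.mpr hM
  haveI : IsNoetherian ℤ (J → M) := inferInstance
  set pJ : (I → M) →ₗ[ℤ] (J → M) := LinearMap.funLeft ℤ M ((↑) : J → I) with hpJ
  let D : Finset I → Submodule ℤ (I → M) := fun K =>
    { carrier := {g | ∀ i ∉ K, g i = 0}
      add_mem' := fun {a b} ha hb i hi => by simp [ha i hi, hb i hi]
      zero_mem' := fun i _ => rfl
      smul_mem' := fun c a ha i hi => by simp [ha i hi] }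
  have hDmono : ∀ {K K' : Finset I}, K ⊆ K' → D K ≤ D K' := by
    intro K K' hKK' g hg i hi
    exact hg i fun hik => hi (hKK' hik)
  let S : Finset I → Submodule ℤ (J → M) := fun K =>
    (AddSubgroup.toIntSubmodule H ⊓ D K).map pJ
  obtain ⟨S₀, ⟨K₀, rfl⟩, hmax⟩ :=
    set_has_maximal_iff_noetherian.mpr (inferInstance : IsNoetherian ℤ (J → M))
      {T | ∃ K : Finset I, S K = T} ⟨S ∅, ∅, rfl⟩
  have hle : ∀ K : Finset I, S K ≤ S K₀ := by
    intro K
    have h1 : S K₀ ≤ S (K₀ ∪ K) :=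
      Submodule.map_mono (inf_le_inf le_rfl (hDmono Finset.subset_union_left))
    have h2 : S K₀ = S (K₀ ∪ K) :=
      h1.lt_or_eq.resolve_left (hmax _ ⟨K₀ ∪ K, rfl⟩)
    rw [h2]
    exact Submodule.map_mono (inf_le_inf le_rfl (hDmono Finset.subset_union_right))
  refine ⟨↑K₀, K₀.finite_toSet, ?_⟩
  apply Set.Subset.antisymm
  · intro x hx
    rw [hH J hJ] at hx
    obtain ⟨g, ⟨hgH, hgfin⟩, rfl⟩ := hx
    have hmem : proj J g ∈ S hgfin.toFinset := by
      refine ⟨g, ⟨hgH, ?_⟩, rfl⟩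
      intro i hi
      by_contra hg0
      exact hi (hgfin.mem_toFinset.mpr hg0)
    obtain ⟨y, ⟨hyH, hyD⟩, hy⟩ := hle _ hmem
    exact ⟨y, ⟨hyH, hyD⟩, hy⟩
  · exact Set.image_mono Set.inter_subset_left

/-- If `I` is infinite and `M` is not finitely generated, there is a countable
controllable subgroup of `M^I` that is not uniformly controllable. -/
lemma counterexample_lemma' {I M : Type*} [AddCommGroup M] [Infinite I]
    (hM : ¬ AddGroup.FG M) :
    ∃ H : AddSubgroup (I → M), (H : Set (I → M)).Countable ∧
      Controllable H ∧ ¬ UniformlyControllable H := by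
  classical
  have hex : ∀ S : Finset M, ∃ x : M, x ∉ AddSubgroup.closure (↑S : Set M) := by
    intro S
    by_contra hcon
    push_neg at hcon
    exact hM (AddGroup.fg_iff.mpr ⟨↑S, (AddSubgroup.eq_top_iff' _).mpr hcon, S.finite_toSet⟩)
  choose pick hpick using hex
  let F : ℕ → Finset M := fun n => Nat.rec ∅ (fun _ Fn => insert (pick Fn) Fn) n
  let m : ℕ → M := fun n => pick (F n)
  have hFsucc : ∀ n, F (n + 1) = insert (m n) (F n) := fun n => rfl
  have hFmono : ∀ {k n : ℕ}, k ≤ n → F k ⊆ F n := by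
    intro k n hkn
    induction n with
    | zero => simp [Nat.le_zero.mp hkn]
    | succ n ih =>
      rcases Nat.lt_or_ge k (n+1) with hlt | hge
      · exact (ih (Nat.lt_succ_iff.mp hlt)).trans (by rw [hFsucc]; exact Finset.subset_insert _ _)
      · have : k = n + 1 := le_antisymm hkn hge
        simp [this]
  have hmF : ∀ {k n : ℕ}, k < n → m k ∈ F n := by
    intro k n hkn
    have : m k ∈ F (k + 1) := by rw [hFsucc]; exact Finset.mem_insert_self _ _
    exact hFmono hkn this
  let e : ℕ ↪ I := Infinite.natEmbedding I
  let h : ℕ → (I → M) := fun n => Pi.single (e 0) (m n) + Pi.single (e (n+1)) (m n)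
  let φ : (ℕ →₀ ℤ) →+ (I → M) :=
    Finsupp.liftAddHom (fun n => zmultiplesHom (I → M) (h n))
  have hφ : ∀ c : ℕ →₀ ℤ, φ c = ∑ n ∈ c.support, c n • h n := by
    intro c
    rw [Finsupp.liftAddHom_apply]
    rfl
  have he0 : ∀ n, h n (e 0) = m n := by
    intro n
    have : e (n+1) ≠ e 0 := fun hh => Nat.succ_ne_zero n (e.injective hh)
    simp [h, Pi.single_eq_same, Pi.single_eq_of_ne this]
  have heval0 : ∀ c : ℕ →₀ ℤ, φ c (e 0) = ∑ n ∈ c.support, c n • m n := by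
    intro c
    rw [hφ, Finset.sum_apply]
    exact Finset.sum_congr rfl fun n _ => by rw [Pi.smul_apply, he0]
  have hevalk : ∀ (c : ℕ →₀ ℤ) (k : ℕ), φ c (e (k+1)) = c k • m k := by
    intro c k
    rw [hφ, Finset.sum_apply]
    have hterm : ∀ n : ℕ, (c n • h n) (e (k+1)) = if n = k then c n • m n else 0 := by
      intro n
      have h1 : e 0 ≠ e (k+1) := fun hh => Nat.succ_ne_zero k (e.injective hh).symm
      by_cases hnk : n = k
      · subst hnk
        simp [h, Pi.single_eq_same, Pi.single_eq_of_ne h1.symm]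
      · have h2 : e (k+1) ≠ e (n+1) := fun hh =>
          hnk (Nat.succ_injective (e.injective hh)).symm
        simp [h, Pi.single_eq_of_ne h1.symm, Pi.single_eq_of_ne h2, hnk]
    rcases Finset.decidableMem k c.support with hk | hk
    · have : c k = 0 := Finsupp.notMem_support_iff.mp hk
      rw [Finset.sum_eq_zero, this, zero_smul]
      intro n hn
      rw [hterm]
      split
      · next hnk => exact absurd (hnk ▸ hn) hk
      · rfl
    · rw [Finset.sum_eq_single k]
      · rw [hterm]; simp
      · intro n hn hnk; rw [hterm]; simp [hnk]
      · intro hk'; exact absurd hk hk'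
  refine ⟨φ.range, Set.countable_range φ, ?_, ?_⟩
  · -- controllable: every element has finite support
    have hsub : (φ.range : Set (I → M)) ⊆ {g | {i | g i ≠ 0}.Finite} := by
      rintro g ⟨c, rfl⟩
      have hfin : (⋃ n ∈ (c.support : Set ℕ), ({e 0, e (n+1)} : Set I)).Finite :=
        c.support.finite_toSet.biUnion fun n _ => (Set.finite_singleton _).insert _
      refine hfin.subset ?_
      intro i hi
      by_contra hiU
      apply hi
      rw [hφ, Finset.sum_apply]
      refine Finset.sum_eq_zero fun n hn => ?_
      have : i ∉ ({e 0, e (n+1)} : Set I) := fun hmem =>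
        hiU (Set.mem_biUnion hn hmem)
      have hi1 : i ≠ e 0 := fun hh => this (Or.inl hh)
      have hi2 : i ≠ e (n+1) := fun hh => this (Or.inr hh)
      simp [h, Pi.single_eq_of_ne hi1, Pi.single_eq_of_ne hi2]
    intro J hJ
    rw [Set.inter_eq_left.mpr hsub]
  · -- not uniformly controllable
    intro hUC
    obtain ⟨K, hKfin, heq⟩ := hUC {e 0} (Set.finite_singleton _)
    have hinj : Function.Injective (fun n : ℕ => e (n+1)) := fun a b hab =>
      Nat.succ_injective (e.injective hab)
    have hfin : {n : ℕ | e (n+1) ∈ K}.Finite := hKfin.preimage hinj.injOn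
    obtain ⟨b, hb⟩ := hfin.bddAbove
    set N := b + 1 with hN
    have hNK : ∀ n : ℕ, e (n+1) ∈ K → n < N := fun n hn => Nat.lt_succ_of_le (hb hn)
    have hhN : h N ∈ φ.range := by
      refine ⟨Finsupp.single N 1, ?_⟩
      show φ (Finsupp.single N 1) = h N
      rw [show φ (Finsupp.single N 1) = (1 : ℤ) • h N from
        Finsupp.liftAddHom_apply_single _ _ _]
      exact one_smul _ _
    have hmem : proj {e 0} (h N) ∈ proj {e 0} '' ((φ.range : Set (I → M)) ∩
        {g | ∀ i ∉ K, g i = 0}) := by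
      rw [← heq]
      exact ⟨h N, hhN, rfl⟩
    obtain ⟨g, ⟨⟨c, rfl⟩, hgK⟩, hproj⟩ := hmem
    have hval : φ c (e 0) = h N (e 0) := congrFun hproj ⟨e 0, rfl⟩
    have hval' : φ c (e 0) = m N := hval.trans (he0 N)
    have hmNC : m N ∈ AddSubgroup.closure (↑(F N) : Set M) := by
      rw [← hval', heval0]
      refine AddSubgroup.sum_mem _ fun n _ => ?_
      rcases Nat.lt_or_ge n N with hlt | hge
      · exact AddSubgroup.zsmul_mem _ (AddSubgroup.subset_closure (hmF hlt)) _
      · have hnK : e (n+1) ∉ K := fun hk => absurd (hNK n hk) (not_lt.mpr hge)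
        have : c n • m n = 0 := by rw [← hevalk c n]; exact hgK _ hnK
        rw [this]
        exact zero_mem _
    exact hpick (F N) hmNC

theorem controllable_eq_uniformlyControllable_iff_finite_or_fg
    {I : Type*} (M : Type*) [AddCommGroup M] :
    ((∀ H : AddSubgroup (I → M), (H : Set (I → M)).Countable →
        Controllable H → UniformlyControllable H) ↔
      (∀ H : AddSubgroup (I → M), Controllable H → UniformlyControllable H)) ∧
    ((∀ H : AddSubgroup (I → M), Controllable H → UniformlyControllable H) ↔
      (Finite I ∨ AddGroup.FG M)) := by
  have L1 : (Finite I ∨ AddGroup.FG M) →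
      ∀ H : AddSubgroup (I → M), Controllable H → UniformlyControllable H := by
    rintro (hI | hM) H hH
    · exact uc_of_finite' H
    · exact uc_of_fg' hM H hH
  have L2 : ¬(Finite I ∨ AddGroup.FG M) →
      ∃ H : AddSubgroup (I → M), (H : Set (I → M)).Countable ∧
        Controllable H ∧ ¬ UniformlyControllable H := by
    intro hcase
    push_neg at hcase
    haveI : Infinite I := hcase.1
    exact counterexample_lemma' hcase.2
  constructor
  · constructor
    · intro hc H hH
      by_cases hcase : Finite I ∨ AddGroup.FG M
      · exact L1 hcase H hH
      · obtain ⟨H', hcnt, hctrl, hnuc⟩ := L2 hcase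
        exact absurd (hc H' hcnt hctrl) hnuc
    · intro hall H _ hH
      exact hall H hH
  · constructor
    · intro hall
      by_contra hcase
      obtain ⟨H', _, hctrl, hnuc⟩ := L2 hcase
      exact hnuc (hall H' hctrl)
    · intro hcase H hH
      exact L1 hcase H hH
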